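/- With the same definitions, the stronger inequality |T| ≤ (k/(k+1))·|I ∪ U| holds, i.e., (k+1)|T| ≤ k(|I| + |U|) (noting I and U are disjoint since I ⊆ [0, b−1] and U ⊆ [ka+2b, (k+1)a+b−1]). -/

import Mathlib

/-- `Sx a b k x = {x, x+a, ..., x+k*a, x+k*a+b}` -/
def Sx (a b k x : ℤ) : Set ℤ :=
  {y | ∃ j : ℤ, 0 ≤ j ∧ j ≤ k ∧ y = x + j * a} ∪ {x + k * a + b}

theorem stmt16
    (a b k : ℤ) (ha : 0 < a) (hb : 0 < b) (hba : b < a) (hab : a < 2*b) (hk : 1 ≤ k)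
    (A : Set ℤ) (h0A : (0:ℤ) ∈ A)
    (havoid : ∀ x ∈ A, ∀ y ∈ A,
      ¬ ((∃ j : ℤ, 1 ≤ j ∧ j ≤ k ∧ x - y = j * a) ∨
         (∃ j : ℤ, 0 ≤ j ∧ j ≤ k ∧ x - y = j * a + b)))
    (T U I : Set ℤ)
    (hT : T = A ∩ ⋃ i ∈ Set.Icc (0:ℤ) (k-1), Set.Icc (i*a + b + 1) ((i+1)*a - 1))
    (hU : U = Set.Icc (k*a + 2*b) ((k+1)*a + b - 1) \ A)
    (hI : I = {x ∈ Set.Icc (0:ℤ) (b-1) | A ∩ Sx a b k x = ∅}) :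
    (k + 1) * (T.ncard : ℤ) ≤ k * ((I.ncard : ℤ) + (U.ncard : ℤ)) := by
  classical
  have hka : a ≤ k * a := le_mul_of_one_le_left ha.le hk
  -- exclusion lemmas
  have ex1 : ∀ z j : ℤ, 1 ≤ j → j ≤ k → z + j*a ∈ A → z ∉ A :=
    fun z j h1 h2 hw hz => havoid _ hw _ hz (Or.inl ⟨j, h1, h2, by ring⟩)
  have ex2 : ∀ z j : ℤ, 1 ≤ j → j ≤ k → z - j*a ∈ A → z ∉ A :=
    fun z j h1 h2 hw hz => havoid _ hz _ hw (Or.inl ⟨j, h1, h2, by ring⟩)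
  have ex3 : ∀ z j : ℤ, 0 ≤ j → j ≤ k → z + (j*a + b) ∈ A → z ∉ A :=
    fun z j h1 h2 hw hz => havoid _ hw _ hz (Or.inr ⟨j, h1, h2, by ring⟩)
  have ex4 : ∀ z j : ℤ, 0 ≤ j → j ≤ k → z - (j*a + b) ∈ A → z ∉ A :=
    fun z j h1 h2 hw hz => havoid _ hz _ hw (Or.inr ⟨j, h1, h2, by ring⟩)
  -- decomposition of T elements
  have hdec : ∀ t ∈ T, t ∈ A ∧ 0 ≤ (t-b)/a ∧ (t-b)/a ≤ k-1 ∧ 1 ≤ (t-b)%a ∧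
      (t-b)%a ≤ a-b-1 ∧ t = (t-b)/a * a + b + (t-b)%a := by
    intro t ht
    rw [hT] at ht
    obtain ⟨htA, hti⟩ := ht
    simp only [Set.mem_iUnion, Set.mem_Icc, exists_prop] at hti
    obtain ⟨i, ⟨hi0, hi1⟩, h2, h3⟩ := hti
    have hexp : (i+1)*a = i*a + a := by ring
    have h4 : 0 ≤ t - i*a - b := by omega
    have h5 : t - i*a - b < a := by omega
    have hr : t - b = (t - i*a - b) + a * i := by ring
    have hm : (t-b) % a = t - i*a - b := by
      rw [hr, Int.add_mul_emod_self_left, Int.emod_eq_of_lt h4 h5]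
    have hd : (t-b)/a = i := by
      rw [hr, Int.add_mul_ediv_left _ _ (by omega : a ≠ 0),
        Int.ediv_eq_zero_of_lt h4 h5, zero_add]
    refine ⟨htA, by omega, by omega, by omega, by omega, ?_⟩
    rw [hd, hm]; ring
  have hTA : ∀ t ∈ T, t ∈ A := fun t ht => (hdec t ht).1
  -- col injective on T
  have hcolInj : ∀ t ∈ T, ∀ t' ∈ T, (t-b)%a = (t'-b)%a → t = t' := by
    intro t ht t' ht' hc
    obtain ⟨hA, hr0, hr1, hc0, hc1, he⟩ := hdec t ht
    obtain ⟨hA', hr0', hr1', hc0', hc1', he'⟩ := hdec t' ht'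
    rcases lt_trichotomy ((t-b)/a) ((t'-b)/a) with h|h|h
    · exfalso
      refine ex2 t' ((t'-b)/a - (t-b)/a) (by omega) (by omega) ?_ hA'
      have : t' - ((t'-b)/a - (t-b)/a)*a = t := by linear_combination he' - he - hc
      rw [this]; exact hA
    · rw [he, he', h, hc]
    · exfalso
      refine ex2 t ((t-b)/a - (t'-b)/a) (by omega) (by omega) ?_ hA
      have : t - ((t-b)/a - (t'-b)/a)*a = t' := by linear_combination he - he' + hc
      rw [this]; exact hA'
  -- the canonical U element of each T element
  have hE1 : ∀ t ∈ T, (t-b)%a + k*a + 2*b ∈ U := by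
    intro t ht
    obtain ⟨hA, hr0, hr1, hc0, hc1, he⟩ := hdec t ht
    rw [hU]
    refine ⟨⟨by linarith, by linarith⟩, ?_⟩
    refine ex4 _ ((k - (t-b)/a)) (by omega) (by omega) ?_
    have : (t-b)%a + k*a + 2*b - ((k - (t-b)/a)*a + b) = t := by linear_combination -he
    rw [this]; exact hA
  -- basic disjointness
  have hUA : ∀ y ∈ U, y ∉ A := by
    intro y hy; rw [hU] at hy; exact hy.2
  have hUrange : ∀ y ∈ U, k*a + 2*b ≤ y ∧ y ≤ (k+1)*a + b - 1 := by
    intro y hy; rw [hU] at hy; exact hy.1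
  have hIrange : ∀ y ∈ I, 0 ≤ y ∧ y ≤ b - 1 := by
    intro y hy; rw [hI] at hy; exact hy.1
  have hIA : ∀ y ∈ I, y ∉ A := by
    intro y hy hyA
    rw [hI] at hy
    have hym : y ∈ A ∩ Sx a b k y := ⟨hyA, Or.inl ⟨0, le_refl 0, by omega, by ring⟩⟩
    rw [hy.2] at hym
    exact hym
  have hIU : ∀ y, y ∈ I → y ∈ U → False := by
    intro y h1 h2
    have := (hIrange y h1).2
    have := (hUrange y h2).1
    linarith
  have hIT : ∀ y, y ∈ I → y ∈ T → False := fun y h1 h2 => hIA y h1 (hTA y h2)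
  have hUT : ∀ y, y ∈ U → y ∈ T → False := fun y h1 h2 => hUA y h1 (hTA y h2)
  -- position exclusions generated by a witness
  have stepPos : ∀ x p' : ℤ, 1 ≤ p' → p' ≤ k → x + p'*a ∈ A →
      (∀ q, 0 ≤ q → q < p' → (x + (a-b)) + q*a ∉ A) ∧ ((x + (a-b)) + k*a + b ∉ A) := by
    intro x p' h1 h2 hs
    constructor
    · intro q hq0 hq1
      refine ex3 _ (p'-1-q) (by omega) (by omega) ?_
      have : x + (a-b) + q*a + ((p'-1-q)*a + b) = x + p'*a := by ring
      rw [this]; exact hs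
    · refine ex2 _ (k+1-p') (by omega) (by omega) ?_
      have : x + (a-b) + k*a + b - (k+1-p')*a = x + p'*a := by ring
      rw [this]; exact hs
  -- empty-chain case gives an I element
  have stepEmpty : ∀ x p : ℤ, 1 ≤ x → x ≤ b-1 → 1 ≤ p → p ≤ k →
      (∀ q, 0 ≤ q → q < p → x + q*a ∉ A) → (x + k*a + b ∉ A) →
      (∀ q, p ≤ q → q ≤ k → x + q*a ∉ A) → x ∈ I := by
    intro x p h1 h2 h3 h4 h5 h6 h7
    rw [hI]
    refine ⟨⟨by omega, by omega⟩, ?_⟩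
    rw [Set.eq_empty_iff_forall_notMem]
    rintro z ⟨hzA, hzS⟩
    rcases hzS with hz | hz
    · obtain ⟨j, hj0, hj1, rfl⟩ := hz
      rcases lt_or_ge j p with h | h
      · exact h5 j hj0 h hzA
      · exact h7 j h hj1 hzA
    · rw [Set.mem_singleton_iff] at hz
      rw [hz] at hzA
      exact h6 hzA
  -- terminal step
  have stepTerm : ∀ x p p' : ℤ, 1 ≤ x → x ≤ b-1 → 1 ≤ p → p ≤ k → p ≤ p' → p' ≤ k →
      x + p'*a ∈ A → b ≤ x + (a-b) →
      ((∃ y ∈ I, (a-b) ∣ (y - x)) ∨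
       (∃ y ∈ U, (∀ t' ∈ T, (t'-b)%a + k*a + 2*b ≠ y) ∧ (a-b) ∣ (y - (k*a + b) - x)) ∨
       (∃ t' ∈ T, (a-b) ∣ ((t'-b)%a + b - x) ∧ p ≤ (t'-b)/a)) := by
    intro x p p' h1 h2 h3 h4 hp1 hp2 hs hxb
    have hkk : (k+1)*a = k*a + a := by ring
    obtain ⟨hpos, htop⟩ := stepPos x p' (by omega) hp2 hs
    by_cases hocc : ∃ t' ∈ T, (t'-b)%a = x + (a-b) - b
    · obtain ⟨t', ht', hct'⟩ := hocc
      refine Or.inr (Or.inr ⟨t', ht', ?_, ?_⟩)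
      · rw [show (t'-b)%a + b - x = a - b by omega]
      · by_contra hlt
        push_neg at hlt
        obtain ⟨hA', hr0', hr1', hc0', hc1', he'⟩ := hdec t' ht'
        refine hpos ((t'-b)/a) (by omega) (by omega) ?_
        have : x + (a-b) + ((t'-b)/a)*a = t' := by linear_combination -he' - hct'
        rw [this]; exact hA'
    · refine Or.inr (Or.inl ⟨x + (a-b) + k*a + b, ?_, ?_, ?_⟩)
      · rw [hU]
        exact ⟨⟨by omega, by omega⟩, htop⟩
      · intro t' ht' heq
        exact hocc ⟨t', ht', by omega⟩
      · rw [show x + (a-b) + k*a + b - (k*a+b) - x = a - b by ring]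
  -- the main process, by induction on b-1-x
  have proc : ∀ n : ℕ, ∀ x p : ℤ, (b - 1 - x).toNat ≤ n → 1 ≤ x → x ≤ b - 1 →
      1 ≤ p → p ≤ k → (∀ q, 0 ≤ q → q < p → x + q*a ∉ A) → (x + k*a + b ∉ A) →
      ((∃ y ∈ I, (a-b) ∣ (y - x)) ∨
       (∃ y ∈ U, (∀ t' ∈ T, (t'-b)%a + k*a + 2*b ≠ y) ∧ (a-b) ∣ (y - (k*a + b) - x)) ∨
       (∃ t' ∈ T, (a-b) ∣ ((t'-b)%a + b - x) ∧ p ≤ (t'-b)/a)) := by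
    intro n
    induction n with
    | zero =>
      intro x p hm h1 h2 h3 h4 h5 h6
      by_cases hE : ∃ q, p ≤ q ∧ q ≤ k ∧ x + q*a ∈ A
      · obtain ⟨p', hp1, hp2, hs⟩ := hE
        exact stepTerm x p p' h1 h2 h3 h4 hp1 hp2 hs (by omega)
      · push_neg at hE
        exact Or.inl ⟨x, stepEmpty x p h1 h2 h3 h4 h5 h6 hE, by simp⟩
    | succ n ih =>
      intro x p hm h1 h2 h3 h4 h5 h6
      by_cases hE : ∃ q, p ≤ q ∧ q ≤ k ∧ x + q*a ∈ A
      · obtain ⟨p', hp1, hp2, hs⟩ := hE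
        by_cases hx1 : x + (a-b) ≤ b-1
        · obtain ⟨hpos, htop⟩ := stepPos x p' (by omega) hp2 hs
          have hrec := ih (x + (a-b)) p' (by omega) (by omega) hx1 (by omega) hp2 hpos htop
          rcases hrec with ⟨y, hyI, hyd⟩ | ⟨y, hyU, hyn, hyd⟩ | ⟨t', ht', hd, hp⟩
          · refine Or.inl ⟨y, hyI, ?_⟩
            have := dvd_add hyd (dvd_refl (a-b))
            rwa [show y - (x+(a-b)) + (a-b) = y - x by ring] at this
          · refine Or.inr (Or.inl ⟨y, hyU, hyn, ?_⟩)
            have := dvd_add hyd (dvd_refl (a-b))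
            rwa [show y - (k*a+b) - (x+(a-b)) + (a-b) = y - (k*a+b) - x by ring] at this
          · refine Or.inr (Or.inr ⟨t', ht', ?_, by omega⟩)
            have := dvd_add hd (dvd_refl (a-b))
            rwa [show (t'-b)%a + b - (x+(a-b)) + (a-b) = (t'-b)%a + b - x by ring] at this
        · exact stepTerm x p p' h1 h2 h3 h4 hp1 hp2 hs (by omega)
      · push_neg at hE
        exact Or.inl ⟨x, stepEmpty x p h1 h2 h3 h4 h5 h6 hE, by simp⟩
  -- outcome for every T element
  have hout : ∀ t ∈ T,
      ((∃ y ∈ I, (a-b) ∣ (y - (t-b)%a)) ∨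
       (∃ y ∈ U, (∀ t' ∈ T, (t'-b)%a + k*a + 2*b ≠ y) ∧ (a-b) ∣ (y - (k*a + b) - (t-b)%a)) ∨
       (∃ t' ∈ T, (a-b) ∣ ((t'-b)%a + b - (t-b)%a) ∧ (t-b)/a + 1 ≤ (t'-b)/a)) := by
    intro t ht
    obtain ⟨hA, hr0, hr1, hc0, hc1, he⟩ := hdec t ht
    refine proc (b-1-(t-b)%a).toNat ((t-b)%a) ((t-b)/a + 1) le_rfl hc0 (by omega)
      (by omega) (by omega) ?_ ?_
    · intro q hq0 hq1
      refine ex3 _ ((t-b)/a - q) (by omega) (by omega) ?_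
      have : (t-b)%a + q*a + (((t-b)/a - q)*a + b) = t := by linear_combination -he
      rw [this]; exact hA
    · refine ex2 _ (k - (t-b)/a) (by omega) (by omega) ?_
      have : (t-b)%a + k*a + b - ((k - (t-b)/a)*a) = t := by linear_combination -he
      rw [this]; exact hA
  -- choose the outcome function F
  have hPex : ∀ t : ℤ, ∃ y : ℤ, t ∈ T →
      ((y ∈ I ∧ (a-b) ∣ (y - (t-b)%a)) ∨
       (y ∈ U ∧ (∀ t' ∈ T, (t'-b)%a + k*a + 2*b ≠ y) ∧ (a-b) ∣ (y - (k*a + b) - (t-b)%a)) ∨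
       (y ∈ T ∧ (a-b) ∣ ((y-b)%a + b - (t-b)%a) ∧ (t-b)/a + 1 ≤ (y-b)/a)) := by
    intro t
    by_cases ht : t ∈ T
    · rcases hout t ht with ⟨y, h1, h2⟩ | ⟨y, h1, h2, h3⟩ | ⟨y, h1, h2, h3⟩
      · exact ⟨y, fun _ => Or.inl ⟨h1, h2⟩⟩
      · exact ⟨y, fun _ => Or.inr (Or.inl ⟨h1, h2, h3⟩)⟩
      · exact ⟨y, fun _ => Or.inr (Or.inr ⟨h1, h2, h3⟩)⟩
    · exact ⟨0, fun h => absurd h ht⟩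
  choose F hF using hPex
  -- classify
  have hFcases : ∀ t ∈ T, F t ∈ I ∨ F t ∈ U ∨ F t ∈ T := by
    intro t ht
    rcases hF t ht with ⟨h, _⟩ | ⟨h, _⟩ | ⟨h, _⟩
    exacts [Or.inl h, Or.inr (Or.inl h), Or.inr (Or.inr h)]
  have hFI : ∀ t ∈ T, F t ∈ I → (a-b) ∣ (F t - (t-b)%a) := by
    intro t ht h
    rcases hF t ht with ⟨_, h2⟩ | ⟨h1, _⟩ | ⟨h1, _⟩
    · exact h2
    · exact absurd h (fun hh => hIU _ hh h1)
    · exact absurd h (fun hh => hIT _ hh h1)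
  have hFU : ∀ t ∈ T, F t ∈ U →
      (∀ t' ∈ T, (t'-b)%a + k*a + 2*b ≠ F t) ∧ (a-b) ∣ (F t - (k*a + b) - (t-b)%a) := by
    intro t ht h
    rcases hF t ht with ⟨h1, _⟩ | ⟨_, h2, h3⟩ | ⟨h1, _⟩
    · exact absurd h (fun hh => hIU _ h1 hh)
    · exact ⟨h2, h3⟩
    · exact absurd h (fun hh => hUT _ hh h1)
  have hFT : ∀ t ∈ T, F t ∈ T →
      (a-b) ∣ ((F t - b)%a + b - (t-b)%a) ∧ (t-b)/a + 1 ≤ (F t - b)/a := by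
    intro t ht h
    rcases hF t ht with ⟨h1, _⟩ | ⟨h1, _⟩ | ⟨_, h2, h3⟩
    · exact absurd h (fun hh => hIT _ h1 hh)
    · exact absurd h (fun hh => hUT _ h1 hh)
    · exact ⟨h2, h3⟩
  -- subtract divisibilities
  have hsub : ∀ y c c' : ℤ, (a-b) ∣ (y - c) → (a-b) ∣ (y - c') → (a-b) ∣ (c - c') := by
    intro y c c' d1 d2
    have := dvd_sub d2 d1
    rwa [show y - c' - (y - c) = c - c' by ring] at this
  -- F is injective on T
  have hFinj : Set.InjOn F T := by
    intro t ht t' ht' he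
    have h9 : (a-b) ∣ ((t-b)%a - (t'-b)%a) := by
      rcases hFcases t ht with h|h|h
      · exact hsub (F t) _ _ (hFI t ht h) (by rw [he]; exact hFI t' ht' (he ▸ h))
      · exact hsub (F t - (k*a+b)) _ _ (hFU t ht h).2
          (by rw [he]; exact (hFU t' ht' (he ▸ h)).2)
      · exact hsub ((F t - b)%a + b) _ _ (hFT t ht h).1
          (by rw [he]; exact (hFT t' ht' (he ▸ h)).1)
    obtain ⟨_, _, _, hc0, hc1, _⟩ := hdec t ht
    obtain ⟨_, _, _, hc0', hc1', _⟩ := hdec t' ht'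
    have hc : (t-b)%a = (t'-b)%a := by
      have := Int.eq_zero_of_abs_lt_dvd h9 (abs_lt.mpr ⟨by omega, by omega⟩)
      omega
    exact hcolInj t ht t' ht' hc
  -- the chain set
  set C3 : Set ℤ := {t | t ∈ T ∧ F t ∈ T} with hC3
  have hiter : ∀ n : ℕ, ∀ t ∈ T, (k-1-(t-b)/a).toNat ≤ n →
      ∃ m : ℕ, (∀ j, j < m → F^[j] t ∈ C3) ∧ F^[m] t ∈ T ∧ F^[m] t ∉ C3 := by
    intro n
    induction n with
    | zero =>
      intro t ht hm
      refine ⟨0, by omega, by simpa using ht, ?_⟩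
      rintro ⟨-, hFt⟩
      have h1 := (hFT t ht (by simpa using hFt)).2
      have h2 := (hdec (F t) (by simpa using hFt)).2.2.1
      have h3 := (hdec t ht).2.2.1
      omega
    | succ n ih =>
      intro t ht hm
      by_cases h3 : F t ∈ T
      · have hrow := (hFT t ht h3).2
        obtain ⟨m, hchain, hend, hnot⟩ := ih (F t) h3
          (by have := (hdec (F t) h3).2.2.1; have := (hdec t ht).2.1; omega)
        refine ⟨m+1, ?_, ?_, ?_⟩
        · intro j hj
          cases j with
          | zero => exact ⟨ht, by simpa using h3⟩
          | succ j => rw [Function.iterate_succ_apply]; exact hchain j (by omega)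
        · rw [Function.iterate_succ_apply]; exact hend
        · rw [Function.iterate_succ_apply]; exact hnot
      · exact ⟨0, by omega, by simpa using ht, fun hc => h3 (by simpa using hc.2)⟩
  have hchainT : ∀ (t : ℤ) (m : ℕ), (∀ j, j < m → F^[j] t ∈ C3) → F^[m] t ∈ T →
      ∀ j, j ≤ m → F^[j] t ∈ T := by
    intro t m hch hend j hj
    rcases eq_or_lt_of_le hj with h | h
    · rw [h]; exact hend
    · exact (hch j h).1
  have hrowgrow : ∀ (t : ℤ) (m : ℕ), (∀ i, i < m → F^[i] t ∈ C3) →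
      ∀ j : ℕ, j ≤ m → (t-b)/a + j ≤ (F^[j] t - b)/a := by
    intro t m hch j
    induction j with
    | zero => simp
    | succ j ihj =>
      intro hj
      have h1 := ihj (by omega)
      have hc3 := hch j (by omega)
      have h2 := (hFT _ hc3.1 hc3.2).2
      rw [Function.iterate_succ_apply']
      push_cast
      omega
  have hpeel : ∀ (n d : ℕ) (u v : ℤ), (∀ j, j ≤ n + d → F^[j] u ∈ T) →
      (∀ j, j ≤ n → F^[j] v ∈ T) → F^[n+d] u = F^[n] v → F^[d] u = v := by
    intro n
    induction n with
    | zero => intro d u v _ _ h; simpa using h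
    | succ n ih =>
      intro d u v hu hv h
      have e1' : F^[n+1+d] u = F (F^[n+d] u) := by
        rw [show n+1+d = (n+d)+1 by omega, Function.iterate_succ_apply']
      have e2 : F^[n+1] v = F (F^[n] v) := Function.iterate_succ_apply' F n v
      have := hFinj (hu (n+d) (by omega)) (hv n (by omega)) (by rw [← e1', ← e2]; exact h)
      exact ih d u v (fun j hj => hu j (by omega)) (fun j hj => hv j (by omega)) this
  -- endpoint function
  have hM : ∀ t : ℤ, ∃ m : ℕ, t ∈ T →
      ((∀ j, j < m → F^[j] t ∈ C3) ∧ F^[m] t ∈ T ∧ F^[m] t ∉ C3) := by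
    intro t
    by_cases ht : t ∈ T
    · obtain ⟨m, hm⟩ := hiter (k-1-(t-b)/a).toNat t ht le_rfl
      exact ⟨m, fun _ => hm⟩
    · exact ⟨0, fun h => absurd h ht⟩
  choose M hMp using hM
  have hkey : ∀ t ∈ T, ∀ t' ∈ T, M t' ≤ M t → F^[M t] t = F^[M t'] t' →
      (t-b)/a = (t'-b)/a → t = t' := by
    intro t ht t' ht' hmm hend hrow
    obtain ⟨hch, hendT, -⟩ := hMp t ht
    obtain ⟨hch', hendT', -⟩ := hMp t' ht'
    have hTu : ∀ j, j ≤ M t → F^[j] t ∈ T := hchainT t (M t) hch hendT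
    have hTv : ∀ j, j ≤ M t' → F^[j] t' ∈ T := hchainT t' (M t') hch' hendT'
    have hd : F^[M t - M t'] t = t' := by
      refine hpeel (M t') (M t - M t') t t' (fun j hj => hTu j (by omega)) hTv ?_
      rw [show M t' + (M t - M t') = M t by omega]
      exact hend
    rcases Nat.eq_zero_or_pos (M t - M t') with h0 | h0
    · rw [← hd, h0]; simp
    · exfalso
      have hg := hrowgrow t (M t) hch (M t - M t') (by omega)
      rw [hd] at hg
      have : (1:ℤ) ≤ (M t - M t' : ℕ) := by exact_mod_cast h0
      omega
  -- finiteness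
  have hTfin : T.Finite := by
    refine Set.Finite.subset (Set.finite_Icc 0 ((k+1)*a)) ?_
    intro t ht
    obtain ⟨_, hr0, hr1, hc0, hc1, he⟩ := hdec t ht
    simp only [Set.mem_Icc]
    constructor
    · nlinarith [mul_nonneg hr0 ha.le]
    · nlinarith [mul_le_mul_of_nonneg_right (show (t-b)/a ≤ k - 1 from hr1) ha.le]
  have hUfin : U.Finite := by
    refine Set.Finite.subset (Set.finite_Icc (k*a+2*b) ((k+1)*a+b-1)) ?_
    intro y hy
    exact Set.mem_Icc.mpr (hUrange y hy)
  have hIfin : I.Finite := by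
    refine Set.Finite.subset (Set.finite_Icc 0 (b-1)) ?_
    intro y hy
    exact Set.mem_Icc.mpr (hIrange y hy)
  -- finset versions
  set tF := hTfin.toFinset with htF
  set uF := hUfin.toFinset with huF
  set iF := hIfin.toFinset with hiF
  set dF := tF.filter (fun t => F t ∉ T) with hdF
  set w1F := dF.filter (fun t => F t ∈ I) with hw1F
  set w2F := dF.filter (fun t => F t ∈ U) with hw2F
  have htFm : ∀ t, t ∈ tF ↔ t ∈ T := fun t => Set.Finite.mem_toFinset _
  have huFm : ∀ t, t ∈ uF ↔ t ∈ U := fun t => Set.Finite.mem_toFinset _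
  have hiFm : ∀ t, t ∈ iF ↔ t ∈ I := fun t => Set.Finite.mem_toFinset _
  set K := k.toNat with hKdef
  have hKk : (K : ℤ) = k := Int.toNat_of_nonneg (by omega)
  -- counting 1 : |T| ≤ |dF| * K
  have hcard1 : tF.card ≤ dF.card * K := by
    have := Finset.card_le_card_of_injOn (fun t => (F^[M t] t, (t-b)/a))
      (s := tF) (t := dF ×ˢ Finset.Icc (0:ℤ) (k-1)) ?_ ?_
    · rwa [Finset.card_product, Int.card_Icc, show k - 1 + 1 - 0 = k by ring] at this
    · intro t htm
      have ht : t ∈ T := (htFm t).1 htm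
      obtain ⟨hch, hendT, hendN⟩ := hMp t ht
      rw [Finset.mem_coe, Finset.mem_product]
      constructor
      · rw [hdF, Finset.mem_filter]
        refine ⟨(htFm _).2 hendT, ?_⟩
        intro hFe
        exact hendN ⟨hendT, hFe⟩
      · obtain ⟨_, hr0, hr1, _⟩ := hdec t ht
        exact Finset.mem_Icc.mpr ⟨hr0, hr1⟩
    · intro t htm t' htm' hpe
      have ht : t ∈ T := (htFm t).1 htm
      have ht' : t' ∈ T := (htFm t').1 htm'
      rw [Prod.ext_iff] at hpe
      obtain ⟨he, hr⟩ := hpe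
      simp only at he hr
      rcases le_total (M t') (M t) with h | h
      · exact hkey t ht t' ht' h he hr
      · exact (hkey t' ht' t ht h he.symm hr.symm).symm
  -- counting 2 : |dF| ≤ |w1F| + |w2F|
  have hcard2 : dF.card ≤ w1F.card + w2F.card := by
    have hsub2 : dF ⊆ w1F ∪ w2F := by
      intro t htd
      rw [hdF, Finset.mem_filter] at htd
      obtain ⟨htm, hFnT⟩ := htd
      have ht : t ∈ T := (htFm t).1 htm
      rcases hFcases t ht with h | h | h
      · exact Finset.mem_union_left _ (by rw [hw1F, Finset.mem_filter]; exact ⟨by rw [hdF, Finset.mem_filter]; exact ⟨htm, hFnT⟩, h⟩)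
      · exact Finset.mem_union_right _ (by rw [hw2F, Finset.mem_filter]; exact ⟨by rw [hdF, Finset.mem_filter]; exact ⟨htm, hFnT⟩, h⟩)
      · exact absurd h hFnT
    calc dF.card ≤ (w1F ∪ w2F).card := Finset.card_le_card hsub2
      _ ≤ w1F.card + w2F.card := Finset.card_union_le _ _
  -- counting 3 : |w1F| ≤ |iF|
  have hw1T : ∀ t ∈ w1F, t ∈ T := by
    intro t htw
    rw [hw1F, Finset.mem_filter, hdF, Finset.mem_filter] at htw
    exact (htFm t).1 htw.1.1
  have hw2T : ∀ t ∈ w2F, t ∈ T := by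
    intro t htw
    rw [hw2F, Finset.mem_filter, hdF, Finset.mem_filter] at htw
    exact (htFm t).1 htw.1.1
  have hcard3 : w1F.card ≤ iF.card := by
    refine Finset.card_le_card_of_injOn F ?_ ?_
    · intro t htw
      rw [hw1F, Finset.mem_coe, Finset.mem_filter] at htw
      exact (hiFm _).2 htw.2
    · intro t htm t' htm' he
      exact hFinj (hw1T t htm) (hw1T t' htm') he
  -- counting 4 : |tF| + |w2F| ≤ |uF|
  have hcard4 : tF.card + w2F.card ≤ uF.card := by
    have hx1 : (tF.image (fun t => (t-b)%a + k*a + 2*b)).card = tF.card := by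
      refine Finset.card_image_of_injOn ?_
      intro t htm t' htm' he
      simp only at he
      exact hcolInj t ((htFm t).1 htm) t' ((htFm t').1 htm') (by omega)
    have hx2 : (w2F.image F).card = w2F.card := by
      refine Finset.card_image_of_injOn ?_
      intro t htm t' htm' he
      exact hFinj (hw2T t htm) (hw2T t' htm') he
    have hdisj : Disjoint (tF.image (fun t => (t-b)%a + k*a + 2*b)) (w2F.image F) := by
      rw [Finset.disjoint_left]
      intro y hy1 hy2
      obtain ⟨t0, ht0, he0⟩ := Finset.mem_image.1 hy1
      obtain ⟨t1, ht1, he1⟩ := Finset.mem_image.1 hy2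
      have ht1T : t1 ∈ T := hw2T t1 ht1
      have hFt1U : F t1 ∈ U := by
        rw [hw2F, Finset.mem_filter] at ht1
        exact ht1.2
      exact (hFU t1 ht1T hFt1U).1 t0 ((htFm t0).1 ht0) (by rw [he0, he1])
    have hsub4 : (tF.image (fun t => (t-b)%a + k*a + 2*b)) ∪ (w2F.image F) ⊆ uF := by
      intro y hy
      rcases Finset.mem_union.1 hy with hy | hy
      · obtain ⟨t0, ht0, he0⟩ := Finset.mem_image.1 hy
        rw [← he0]
        exact (huFm _).2 (hE1 t0 ((htFm t0).1 ht0))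
      · obtain ⟨t1, ht1, he1⟩ := Finset.mem_image.1 hy
        rw [← he1]
        refine (huFm _).2 ?_
        rw [hw2F, Finset.mem_filter] at ht1
        exact ht1.2
    calc tF.card + w2F.card
        = (tF.image (fun t => (t-b)%a + k*a + 2*b)).card + (w2F.image F).card := by
          rw [hx1, hx2]
      _ = ((tF.image (fun t => (t-b)%a + k*a + 2*b)) ∪ (w2F.image F)).card :=
          (Finset.card_union_of_disjoint hdisj).symm
      _ ≤ uF.card := Finset.card_le_card hsub4
  -- assemble
  have hKpos : 1 ≤ K := by omega
  have hnat : (K + 1) * tF.card ≤ K * (iF.card + uF.card) := by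
    calc (K + 1) * tF.card = K * tF.card + tF.card := by ring
      _ ≤ K * tF.card + dF.card * K := by omega
      _ = K * (tF.card + dF.card) := by ring
      _ ≤ K * (tF.card + (w1F.card + w2F.card)) := by
          exact Nat.mul_le_mul_left K (by omega)
      _ = K * (w1F.card + (tF.card + w2F.card)) := by ring
      _ ≤ K * (iF.card + uF.card) := Nat.mul_le_mul_left K (by omega)
  have eT : T.ncard = tF.card := Set.ncard_eq_toFinset_card _ hTfin
  have eU : U.ncard = uF.card := Set.ncard_eq_toFinset_card _ hUfin
  have eI : I.ncard = iF.card := Set.ncard_eq_toFinset_card _ hIfin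
  rw [eT, eU, eI, ← hKk]
  exact_mod_cast hnat
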